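/- The measurement operators of the combined Wigner+Deutsch observer do not form a PVM: with ℋ_S a qubit, ℋ_F containing orthonormal |Φ^F[0]⟩, |Φ^F[1]⟩, M^W_l (l=0,1) the projections I_S ⊗ |Φ^F[l]⟩⟨Φ^F[l]|, M^W_2 = I_{S+F} − M^W_0 − M^W_1 (as operators on ℋ_S⊗ℋ_F after tensoring with I_S appropriately), and M^D_± as the projections onto and complementary to |Ψ^{S+F}[+]⟩ = (|0⟩⊗|Φ^F[0]⟩+|1⟩⊗|Φ^F[1]⟩)/√2: the family M^{W+D}_{l,m} = M^D_m ∘ (I_S ⊗ M^W_l), indexed by (l,m) ∈ {0,1,2}×{+,−}, satisfies the completeness equation Σ_{l,m}(M^{W+D}_{l,m})† M^{W+D}_{l,m} = I_{S+F}, but there exists (l,m) with (M^{W+D}_{l,m})² ≠ M^{W+D}_{l,m} (equivalently some M^{W+D}_{l,m} is not a projector), so {M^{W+D}_{l,m}} is not a PVM. -/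

import Mathlib

open scoped ComplexInnerProductSpace
open ContinuousLinearMap

/-- The measurement operators of the combined Wigner+Deutsch observer do not
form a PVM: let `K = ℋ_S ⊗ ℋ_F` carry the tensor-product inner-product
structure, with `ℋ_S` a qubit with orthonormal basis `{|0⟩,|1⟩}` and `ℋ_F`
containing orthonormal `|Φ^F[0]⟩, |Φ^F[1]⟩`. Let `W_l = I_S ⊗ |Φ^F[l]⟩⟨Φ^F[l]|`
for `l = 0,1`, `W_2 = I − W_0 − W_1`, and let `M^D_±` (with `+` encoded as
`true`) be the projection onto `|Ψ^{S+F}[+]⟩ = (|0⟩⊗|Φ^F[0]⟩+|1⟩⊗|Φ^F[1]⟩)/√2`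
and its complement. Then the family `M^{W+D}_{l,m} = M^D_m ∘ W_l` satisfies the
completeness equation, but some `M^{W+D}_{l,m}` is not idempotent, hence the
family is not a PVM. -/
theorem stmt19 {HS HF K : Type*}
    [NormedAddCommGroup HS] [InnerProductSpace ℂ HS] [FiniteDimensional ℂ HS]
    [NormedAddCommGroup HF] [InnerProductSpace ℂ HF] [FiniteDimensional ℂ HF]
    [NormedAddCommGroup K] [InnerProductSpace ℂ K] [FiniteDimensional ℂ K]
    (e : Fin 2 → HS) (he : Orthonormal ℂ e)
    (hespan : Submodule.span ℂ (Set.range e) = ⊤)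
    (Φ : Fin 2 → HF) (hΦ : Orthonormal ℂ Φ)
    (tmul : HS →ₗ[ℂ] HF →ₗ[ℂ] K)
    (htmul : ∀ (x y : HS) (u v : HF),
      ⟪tmul x u, tmul y v⟫ = ⟪x, y⟫ * ⟪u, v⟫)
    (hKspan : Submodule.span ℂ {z : K | ∃ (x : HS) (u : HF), z = tmul x u} = ⊤)
    (W : Fin 3 → K →L[ℂ] K)
    (hW0 : ∀ (x : HS) (u : HF), W 0 (tmul x u) = ⟪Φ 0, u⟫ • tmul x (Φ 0))
    (hW1 : ∀ (x : HS) (u : HF), W 1 (tmul x u) = ⟪Φ 1, u⟫ • tmul x (Φ 1))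
    (hW2 : W 2 = ContinuousLinearMap.id ℂ K - W 0 - W 1)
    (hWsa : ∀ l : Fin 3, IsSelfAdjoint (W l))
    (Ψ : K)
    (hΨ : Ψ = ((Real.sqrt 2 : ℂ))⁻¹ • (tmul (e 0) (Φ 0) + tmul (e 1) (Φ 1)))
    (MD : Bool → K →L[ℂ] K)
    (hMDp : ∀ z : K, MD true z = ⟪Ψ, z⟫ • Ψ)
    (hMDm : MD false = ContinuousLinearMap.id ℂ K - MD true)
    (MWD : Fin 3 → Bool → K →L[ℂ] K)
    (hMWD : ∀ (l : Fin 3) (m : Bool), MWD l m = MD m ∘L W l) :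
    (∑ l : Fin 3, ∑ m : Bool,
        adjoint (MWD l m) ∘L MWD l m = ContinuousLinearMap.id ℂ K) ∧
    ¬ ∀ (l : Fin 3) (m : Bool), MWD l m ∘L MWD l m = MWD l m := by

  classical
  have hΦij := orthonormal_iff_ite.mp hΦ
  have heij := orthonormal_iff_ite.mp he
  have ext_clm : ∀ (T U : K →L[ℂ] K),
      (∀ (x : HS) (u : HF), T (tmul x u) = U (tmul x u)) → T = U := by
    intro T U h
    apply ContinuousLinearMap.coe_injective (LinearMap.ext_on hKspan ?_)
    rintro z ⟨x, u, rfl⟩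
    exact h x u
  -- basic scalar facts
  set c : ℂ := ((Real.sqrt 2 : ℂ))⁻¹ with hcdef
  have hconjc : (starRingEnd ℂ) c = c := by
    rw [hcdef, map_inv₀, Complex.conj_ofReal]
  have hcc : c * c = 2⁻¹ := by
    have h2 : ((Real.sqrt 2 : ℝ) : ℂ) * ((Real.sqrt 2 : ℝ) : ℂ) = 2 := by
      rw [← Complex.ofReal_mul, Real.mul_self_sqrt (by norm_num : (0:ℝ) ≤ 2)]
      norm_num
    rw [hcdef, ← mul_inv, h2]
  have hcne : c ≠ 0 := by
    rw [hcdef]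
    apply inv_ne_zero
    rw [Complex.ofReal_ne_zero]
    exact Real.sqrt_ne_zero'.mpr (by norm_num)
  -- norm of Ψ
  have hΨΨ : ⟪Ψ, Ψ⟫ = 1 := by
    rw [hΨ]
    simp only [inner_smul_left, inner_smul_right, inner_add_left, inner_add_right,
      htmul, heij, hΦij, hconjc]
    try simp only [← hcdef]
    norm_num
    linear_combination (2:ℂ) * hcc
  have hΨne : Ψ ≠ 0 := by
    intro h0
    rw [h0, inner_zero_left] at hΨΨ
    exact one_ne_zero hΨΨ.symm
  -- W products
  have hW00 : W 0 ∘L W 0 = W 0 := by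
    apply ext_clm
    intro x u
    simp [hW0, map_smul, hΦij, hΦ.1]
  have hW11 : W 1 ∘L W 1 = W 1 := by
    apply ext_clm
    intro x u
    simp [hW1, map_smul, hΦij, hΦ.1]
  have hW01 : W 0 ∘L W 1 = 0 := by
    apply ext_clm
    intro x u
    simp [hW0, hW1, map_smul, hΦij]
  have hW10 : W 1 ∘L W 0 = 0 := by
    apply ext_clm
    intro x u
    simp [hW0, hW1, map_smul, hΦij]
  -- MD facts
  have hMDtt : MD true ∘L MD true = MD true := by
    ext z
    have hΨn : ‖Ψ‖ = 1 := by
      have h := inner_self_eq_norm_sq (𝕜 := ℂ) Ψ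
      rw [hΨΨ, RCLike.one_re] at h
      nlinarith [norm_nonneg Ψ]
    simp [hMDp, inner_smul_right, hΨΨ, hΨn]
  have hMDta : adjoint (MD true) = MD true := by
    symm
    rw [ContinuousLinearMap.eq_adjoint_iff]
    intro x y
    simp only [hMDp, inner_smul_left, inner_smul_right, ← inner_conj_symm Ψ x,
      starRingEnd_self_apply]
    ring
  have hMDfa : adjoint (MD false) = MD false := by
    rw [hMDm, map_sub, ContinuousLinearMap.adjoint_id, hMDta]
  have hMDff : MD false ∘L MD false = MD false := by
    simp only [hMDm, ← ContinuousLinearMap.one_def, ← ContinuousLinearMap.mul_def] at hMDtt ⊢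
    rw [sub_mul, mul_sub, mul_sub, hMDtt]
    noncomm_ring
  have hMDsum : MD true + MD false = ContinuousLinearMap.id ℂ K := by
    rw [hMDm]
    abel
  constructor
  · -- completeness
    have hadj : ∀ (l : Fin 3) (m : Bool),
        adjoint (MWD l m) ∘L MWD l m = W l ∘L (MD m ∘L W l) := by
      intro l m
      rw [hMWD, adjoint_comp, (ContinuousLinearMap.isSelfAdjoint_iff'.mp (hWsa l)),
        (by cases m <;> [exact hMDfa; exact hMDta] : adjoint (MD m) = MD m)]
      rw [ContinuousLinearMap.comp_assoc, ← ContinuousLinearMap.comp_assoc (MD m),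
        (by cases m <;> [exact hMDff; exact hMDtt] : MD m ∘L MD m = MD m)]
    have hsum : ∀ l : Fin 3, (∑ m : Bool, adjoint (MWD l m) ∘L MWD l m) = W l ∘L W l := by
      intro l
      rw [Fintype.sum_bool, hadj, hadj, ← ContinuousLinearMap.comp_add, ← add_comp, hMDsum,
        ContinuousLinearMap.id_comp]
    calc (∑ l : Fin 3, ∑ m : Bool, adjoint (MWD l m) ∘L MWD l m)
        = ∑ l : Fin 3, W l ∘L W l := by
          exact Finset.sum_congr rfl fun l _ => hsum l
      _ = ContinuousLinearMap.id ℂ K := by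
          rw [Fin.sum_univ_three]
          simp only [hW2, ← ContinuousLinearMap.one_def, ← ContinuousLinearMap.mul_def]
            at hW00 hW11 hW01 hW10 ⊢
          have expand : ∀ A B : K →L[ℂ] K, (1 - A - B) * (1 - A - B)
              = 1 - A - B - (A - A*A - B*A) - (B - A*B - B*B) := by
            intro A B
            noncomm_ring
          rw [expand, hW00, hW01, hW10, hW11]
          noncomm_ring
  · -- not idempotent
    intro hidem
    have h := congrArg (fun T => T (tmul (e 0) (Φ 0))) (hidem 0 true)
    simp only [ContinuousLinearMap.comp_apply] at h
    have hinner : ⟪Ψ, tmul (e 0) (Φ 0)⟫ = c := by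
      rw [hΨ]
      simp only [inner_smul_left, inner_add_left, htmul, heij, hΦij, hconjc, ← hcdef]
      norm_num
    have h1 : MWD 0 true (tmul (e 0) (Φ 0)) = c • Ψ := by
      rw [hMWD, ContinuousLinearMap.comp_apply, hW0]
      simp [hΦij, hMDp, hinner, hΦ.1]
    have hW0Ψ : W 0 Ψ = c • tmul (e 0) (Φ 0) := by
      rw [hΨ, map_smul, map_add, hW0, hW0]
      simp [hΦij, ← hcdef, hΦ.1]
    have h2 : MWD 0 true (MWD 0 true (tmul (e 0) (Φ 0))) = (c * c * c) • Ψ := by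
      rw [h1, hMWD, ContinuousLinearMap.comp_apply, map_smul, hW0Ψ, map_smul, hMDp,
        inner_smul_right, hinner, smul_smul]
      congr 1
      ring
    rw [h2, h1] at h
    have h3 : (c * c * c - c) • Ψ = 0 := by
      rw [sub_smul, h, sub_self]
    rcases smul_eq_zero.mp h3 with h4 | h4
    · apply hcne
      rw [hcc] at h4
      have : c * (2⁻¹ - 1) = 0 := by rw [mul_sub, mul_one, ← h4]; ring
      rcases mul_eq_zero.mp this with h5 | h5
      · exact h5
      · norm_num at h5
    · exact hΨne h4
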